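/- Let w* ≤ 0 and let g: (−∞,0] → ℝ be convex and differentiable with g(w*) = 0 and χ := g'(0) < 0. Let y: [0,∞) → [w*, 0] be differentiable with y(0) = 0 and y'(t) = g(y(t)) for all t ≥ 0. Then for every t ≥ 0, 0 ≤ y(t) − w* ≤ (−w*)·e^{χt}; that is, |y(t) − w*| ≤ |w*|·e^{χt}. -/

import Mathlib

open Set

/-- Key convexity estimate: for `w ∈ [w*, 0]`, `g w ≤ χ (w - w*)`. -/
lemma key_convex_bound (wstar : ℝ) (hw : wstar < 0) (g : ℝ → ℝ)
    (hconv : ConvexOn ℝ (Iic (0 : ℝ)) g)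
    (hgw : g wstar = 0) (χ : ℝ) (hχ : HasDerivWithinAt g χ (Iic (0 : ℝ)) 0)
    {w : ℝ} (hmem : w ∈ Icc wstar 0) : g w ≤ χ * (w - wstar) := by
  rcases eq_or_lt_of_le hmem.1 with heq | hlt
  · simp [← heq, hgw]
  · have h0 : slope g wstar 0 ≤ χ :=
      hconv.slope_le_of_hasDerivWithinAt (mem_Iic.2 hw.le) (mem_Iic.2 le_rfl) hw hχ
    have hsw : slope g wstar w ≤ χ := by
      rcases eq_or_lt_of_le hmem.2 with heq0 | hlt0
      · rwa [heq0]
      · refine le_trans ?_ h0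
        exact hconv.slope_mono (mem_Iic.2 hw.le)
          ⟨mem_Iic.2 hmem.2, fun h => hlt.ne' (mem_singleton_iff.1 h)⟩
          ⟨mem_Iic.2 le_rfl, fun h => hw.ne (mem_singleton_iff.1 h).symm⟩ hmem.2
    have hslope : slope g wstar w = g w / (w - wstar) := by
      rw [slope_def_field, hgw, sub_zero]
    rw [hslope, div_le_iff₀ (by linarith)] at hsw
    linarith [hsw]

/-- Corollary 3.5 in scalar ODE form: exponential convergence of the
solution of `y' = g(y)`, `y(0) = 0` to the zero `w* ≤ 0` of the convex function `g`,
with rate `χ = g'(0) < 0`: `0 ≤ y(t) − w* ≤ (−w*)·e^{χt}`. -/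
theorem gronwall_convergence_rate (wstar : ℝ) (hw : wstar ≤ 0) (g : ℝ → ℝ)
    (hconv : ConvexOn ℝ (Iic (0 : ℝ)) g)
    (hdiff : ∀ w ∈ Iic (0 : ℝ), DifferentiableWithinAt ℝ g (Iic (0 : ℝ)) w)
    (hgw : g wstar = 0) (χ : ℝ) (hχ : HasDerivWithinAt g χ (Iic (0 : ℝ)) 0)
    (hχneg : χ < 0) (y : ℝ → ℝ) (hy0 : y 0 = 0)
    (hyrange : ∀ t : ℝ, 0 ≤ t → y t ∈ Icc wstar 0)
    (hyderiv : ∀ t : ℝ, 0 ≤ t → HasDerivWithinAt y (g (y t)) (Ici 0) t) :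
    ∀ t : ℝ, 0 ≤ t → 0 ≤ y t - wstar ∧ y t - wstar ≤ (-wstar) * Real.exp (χ * t) := by
  intro t ht
  have hyt := hyrange t ht
  refine ⟨by linarith [hyt.1], ?_⟩
  rcases eq_or_lt_of_le hw with heq | hwlt
  · subst heq
    have : y t = 0 := le_antisymm hyt.2 hyt.1
    simp [this]
  · -- f s = (y s - wstar) * exp (-χ * s) is antitone on Ici 0
    set f : ℝ → ℝ := fun s => (y s - wstar) * Real.exp (-χ * s) with hf
    have hycont : ContinuousOn y (Ici 0) := fun s hs =>
      (hyderiv s hs).continuousWithinAt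
    have hfcont : ContinuousOn f (Ici 0) := by
      apply ContinuousOn.mul
      · exact hycont.sub continuousOn_const
      · exact (Real.continuous_exp.comp (continuous_const.mul continuous_id)).continuousOn
    have hfderiv : ∀ s ∈ interior (Ici (0 : ℝ)), HasDerivAt f
        ((g (y s) - χ * (y s - wstar)) * Real.exp (-χ * s)) s := by
      intro s hs
      rw [interior_Ici] at hs
      have hs0 : (0 : ℝ) ≤ s := le_of_lt hs
      have hyd : HasDerivAt y (g (y s)) s :=
        (hyderiv s hs0).hasDerivAt (Ici_mem_nhds hs)
      have hexp : HasDerivAt (fun u => Real.exp (-χ * u)) (-χ * Real.exp (-χ * s)) s := by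
        have := (((hasDerivAt_id s).const_mul (-χ))).exp
        simpa [mul_comm] using this
      have := (hyd.sub_const wstar).mul hexp
      exact this.congr_deriv (by ring)
    have hanti : AntitoneOn f (Ici 0) := by
      apply antitoneOn_of_deriv_nonpos (convex_Ici 0) hfcont
      · intro s hs
        exact (hfderiv s hs).differentiableAt.differentiableWithinAt
      · intro s hs
        rw [(hfderiv s hs).deriv]
        have hs0 : (0 : ℝ) ≤ s := by rw [interior_Ici] at hs; exact le_of_lt hs
        have hkey : g (y s) ≤ χ * (y s - wstar) :=
          key_convex_bound wstar hwlt g hconv hgw χ hχ (hyrange s hs0)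
        have : (0 : ℝ) < Real.exp (-χ * s) := Real.exp_pos _
        nlinarith
    have hle : f t ≤ f 0 := hanti (self_mem_Ici) ht ht
    have hf0 : f 0 = -wstar := by simp [hf, hy0]
    have hft : f t = (y t - wstar) * Real.exp (-χ * t) := rfl
    rw [hft, hf0] at hle
    have hexppos : (0 : ℝ) < Real.exp (-χ * t) := Real.exp_pos _
    have : (y t - wstar) ≤ -wstar / Real.exp (-χ * t) := by
      rw [le_div_iff₀ hexppos]; linarith
    calc y t - wstar ≤ -wstar / Real.exp (-χ * t) := this
      _ = -wstar * Real.exp (χ * t) := by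
          rw [div_eq_mul_inv, ← Real.exp_neg]; ring_nf
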